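/- Matrix cohomological equation: let B be a real n×n matrix whose eigenvalues μ_j satisfy μ_j/μ_l ≠ exp(±i⟨κ,ρ⟩) for all j,l and all nonzero κ ∈ ℤ^d. Then for every matrix-valued trigonometric polynomial R̃ on 𝕋^d with zero average there exists a unique matrix-valued trigonometric polynomial H with zero average such that H(θ+ρ)B − B·H(θ) = R̃(θ) for all θ. -/

import Mathlib

open Complex

/-- A matrix-valued trigonometric polynomial on `𝕋^d` with zero average
(no constant term): `H(θ) = Σ_{κ≠0} H_κ^{(c)} cos⟨κ,θ⟩ + H_κ^{(s)} sin⟨κ,θ⟩`. -/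
noncomputable def matTrigPoly {d n : ℕ} (S : Finset (Fin d → ℕ))
    (c s : (Fin d → ℕ) → Matrix (Fin n) (Fin n) ℝ) (θ : Fin d → ℝ) :
    Matrix (Fin n) (Fin n) ℝ :=
  ∑ κ ∈ S.erase 0,
    (Real.cos (∑ i, (κ i : ℝ) * θ i) • c κ + Real.sin (∑ i, (κ i : ℝ) * θ i) • s κ)


section Polynomial
open Polynomial

lemma my_eval_charpoly {n : ℕ} (M : Matrix (Fin n) (Fin n) ℂ) (μ : ℂ) :
    M.charpoly.eval μ = (Matrix.scalar (Fin n) μ - M).det := by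
  have h : (Matrix.scalar (Fin n) μ - M) = (M.charmatrix).map (Polynomial.evalRingHom μ) := by
    ext i j
    by_cases h : i = j <;>
      simp [h, Matrix.charmatrix_apply, Matrix.map_apply, Matrix.scalar_apply,
        Matrix.diagonal_apply, Matrix.sub_apply]
  have := (Polynomial.evalRingHom μ).map_det M.charmatrix
  rw [Matrix.charpoly, h, ← RingHom.mapMatrix_apply]
  exact this

lemma my_mem_spectrum_iff {n : ℕ} (M : Matrix (Fin n) (Fin n) ℂ) (μ : ℂ) :
    μ ∈ spectrum ℂ M ↔ M.charpoly.IsRoot μ := by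
  rw [spectrum.mem_iff, Polynomial.IsRoot, my_eval_charpoly]
  rw [Matrix.isUnit_iff_isUnit_det, isUnit_iff_ne_zero, not_ne_iff]
  have h : (algebraMap ℂ (Matrix (Fin n) (Fin n) ℂ)) μ - M = Matrix.scalar (Fin n) μ - M := by
    congr 1
  rw [h]

lemma my_isUnit_aeval {n : ℕ} (A : Matrix (Fin n) (Fin n) ℂ) (p : ℂ[X]) (hp : p.Monic)
    (h : ∀ r ∈ p.roots, r ∉ spectrum ℂ A) : IsUnit (aeval A p) := by
  rw [(IsAlgClosed.splits p).eq_prod_roots_of_monic hp]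
  revert h
  refine Multiset.induction_on p.roots (by simp) ?_
  intro r s ih h
  rw [Multiset.map_cons, Multiset.prod_cons, map_mul]
  refine IsUnit.mul ?_ (ih fun x hx => h x (Multiset.mem_cons_of_mem hx))
  have hr : r ∉ spectrum ℂ A := h r (Multiset.mem_cons_self r s)
  rw [spectrum.mem_iff, not_not] at hr
  have : (aeval A) (X - C r) = -((algebraMap ℂ _) r - A) := by
    rw [map_sub, aeval_X, aeval_C]
    rw [neg_sub]
  rw [this]
  exact hr.neg

lemma my_sylvester_inj {n : ℕ} (A B' : Matrix (Fin n) (Fin n) ℂ)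
    (hdisj : ∀ μ ∈ spectrum ℂ A, μ ∉ spectrum ℂ B')
    (M : Matrix (Fin n) (Fin n) ℂ) (h : A * M = M * B') : M = 0 := by
  have hpow : ∀ k : ℕ, A ^ k * M = M * B' ^ k := by
    intro k; induction k with
    | zero => simp
    | succ k ih => rw [pow_succ, pow_succ, mul_assoc, h, ← mul_assoc, ih, mul_assoc]
  have haeval : ∀ p : ℂ[X], (aeval A p) * M = M * (aeval B' p) := by
    intro p
    induction p using Polynomial.induction_on' with
    | add p q hp hq => rw [map_add, map_add, add_mul, mul_add, hp, hq]
    | monomial k c =>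
        rw [aeval_monomial, aeval_monomial, mul_assoc, hpow, ← mul_assoc, ← mul_assoc]
        congr 1
        rw [Algebra.commutes]
  have hch := haeval B'.charpoly
  rw [Matrix.aeval_self_charpoly, mul_zero] at hch
  have hu : IsUnit (aeval A B'.charpoly) := by
    refine my_isUnit_aeval A _ (Matrix.charpoly_monic B') ?_
    intro r hr hrA
    exact hdisj r hrA ((my_mem_spectrum_iff B' r).2 (Polynomial.isRoot_of_mem_roots hr))
  obtain ⟨u, hu⟩ := hu
  calc M = (↑u⁻¹ * u : Matrix (Fin n) (Fin n) ℂ) * M := by rw [Units.inv_mul, one_mul]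
  _ = ↑u⁻¹ * ((aeval A B'.charpoly) * M) := by rw [hu, mul_assoc]
  _ = 0 := by rw [hch, mul_zero]


noncomputable def sylMap {n : ℕ} (B : Matrix (Fin n) (Fin n) ℝ) (c s : ℝ) :
    (Matrix (Fin n) (Fin n) ℝ × Matrix (Fin n) (Fin n) ℝ)
      →ₗ[ℝ] (Matrix (Fin n) (Fin n) ℝ × Matrix (Fin n) (Fin n) ℝ) where
  toFun P := ((c • P.1 + s • P.2) * B - B * P.1, (c • P.2 - s • P.1) * B - B * P.2)
  map_add' P Q := by
    refine Prod.ext ?_ ?_ <;>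
      · simp only [Prod.fst_add, Prod.snd_add, smul_add, Matrix.add_mul, Matrix.sub_mul,
          Matrix.mul_add, Prod.mk_add_mk]
        module
  map_smul' r P := by
    refine Prod.ext ?_ ?_ <;>
      · simp only [Prod.smul_fst, Prod.smul_snd, RingHom.id_apply, Prod.smul_mk,
          smul_sub, smul_add, Matrix.smul_mul, Matrix.mul_smul, smul_smul, Matrix.add_mul,
          Matrix.sub_mul]
        module

lemma map_ofReal_smul {n : ℕ} (c : ℝ) (A : Matrix (Fin n) (Fin n) ℝ) :
    (c • A).map (Complex.ofReal) = (c : ℂ) • (A.map Complex.ofReal) := by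
  ext i j; simp [Matrix.map_apply, Matrix.smul_apply]

lemma map_ofReal_mul {n : ℕ} (A B : Matrix (Fin n) (Fin n) ℝ) :
    (A * B).map (Complex.ofReal) = A.map Complex.ofReal * B.map Complex.ofReal := by
  ext i j
  simp [Matrix.map_apply, Matrix.mul_apply]

lemma map_ofReal_add {n : ℕ} (A B : Matrix (Fin n) (Fin n) ℝ) :
    (A + B).map (Complex.ofReal) = A.map Complex.ofReal + B.map Complex.ofReal := by
  ext i j; simp [Matrix.map_apply]

lemma map_ofReal_sub {n : ℕ} (A B : Matrix (Fin n) (Fin n) ℝ) :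
    (A - B).map (Complex.ofReal) = A.map Complex.ofReal - B.map Complex.ofReal := by
  ext i j; simp [Matrix.map_apply]

lemma sylMap_bijective {n : ℕ} (B : Matrix (Fin n) (Fin n) ℝ) (hB : IsUnit B) (ω : ℝ)
    (hspec : ∀ μ ∈ spectrum ℂ (B.map Complex.ofReal), ∀ ν ∈ spectrum ℂ (B.map Complex.ofReal),
        μ / ν ≠ Complex.exp (-((ω : ℂ) * Complex.I))) :
    Function.Bijective (sylMap B (Real.cos ω) (Real.sin ω)) := by
  set c := Real.cos ω with hcdef
  set s := Real.sin ω with hsdef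
  have hinj : Function.Injective (sylMap B c s) := by
    rw [← LinearMap.ker_eq_bot, LinearMap.ker_eq_bot']
    intro P hP
    have hP1 : (c • P.1 + s • P.2) * B - B * P.1 = 0 := congrArg Prod.fst hP
    have hP2 : (c • P.2 - s • P.1) * B - B * P.2 = 0 := congrArg Prod.snd hP
    set Bc := B.map (Complex.ofReal) with hBc
    set X := P.1.map (Complex.ofReal) with hXdef
    set Y := P.2.map (Complex.ofReal) with hYdef
    set z : ℂ := (c : ℂ) - (s : ℂ) * Complex.I with hz
    have hzexp : z = Complex.exp (-((ω : ℂ) * Complex.I)) := by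
      have h1 : Complex.exp (-((ω : ℂ) * Complex.I))
          = Complex.cos (ω : ℂ) - Complex.sin (ω : ℂ) * Complex.I := by
        rw [show -((ω:ℂ) * Complex.I) = (-(ω:ℂ)) * Complex.I by ring, Complex.exp_mul_I,
          Complex.cos_neg, Complex.sin_neg]
        ring
      rw [h1, hz, hcdef, hsdef, ← Complex.ofReal_cos, ← Complex.ofReal_sin]
    have hz0 : z ≠ 0 := by rw [hzexp]; exact Complex.exp_ne_zero _
    have e1 : Bc * X = ((c : ℂ) • X + (s : ℂ) • Y) * Bc := by
      have h0 := congrArg (fun M : Matrix (Fin n) (Fin n) ℝ => M.map Complex.ofReal)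
        (sub_eq_zero.mp hP1)
      simp only [map_ofReal_mul, map_ofReal_add, map_ofReal_smul] at h0
      exact h0.symm
    have e2 : Bc * Y = ((c : ℂ) • Y - (s : ℂ) • X) * Bc := by
      have h0 := congrArg (fun M : Matrix (Fin n) (Fin n) ℝ => M.map Complex.ofReal)
        (sub_eq_zero.mp hP2)
      simp only [map_ofReal_mul, map_ofReal_sub, map_ofReal_smul] at h0
      exact h0.symm
    set M : Matrix (Fin n) (Fin n) ℂ := X + Complex.I • Y with hM
    have hIz : Complex.I * z = (s : ℂ) + (c : ℂ) * Complex.I := by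
      rw [hz]
      linear_combination (-(s:ℂ)) * Complex.I_sq
    have hcomm : Bc * M = M * (z • Bc) := by
      have lhs : Bc * M = ((c:ℂ) • X + (s:ℂ) • Y) * Bc
          + Complex.I • (((c:ℂ) • Y - (s:ℂ) • X) * Bc) := by
        rw [hM, Matrix.mul_add, Matrix.mul_smul, e1, e2]
      have rhs : M * (z • Bc) = z • (X * Bc) + (Complex.I * z) • (Y * Bc) := by
        rw [hM, Matrix.add_mul, Matrix.smul_mul, Matrix.mul_smul, Matrix.mul_smul, smul_smul]
      rw [lhs, rhs, hz, hIz]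
      simp only [Matrix.add_mul, Matrix.sub_mul, Matrix.smul_mul, smul_add, smul_sub, smul_smul]
      module
    have hMzero : M = 0 := by
      refine my_sylvester_inj Bc (z • Bc) ?_ M hcomm
      intro μ hμ hμ'
      have hBcU : IsUnit Bc := by
        have := hB.map (RingHom.mapMatrix (Complex.ofRealHom))
        exact this
      set u : ℂˣ := Units.mk0 z hz0 with hu
      set ν : ℂ := z⁻¹ * μ with hν_def
      have h1 : u • ν ∈ spectrum ℂ (u • Bc) := by
        have e : u • ν = μ := by
          rw [Units.smul_def, hu, Units.val_mk0, hν_def, smul_eq_mul, ← mul_assoc,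
            mul_inv_cancel₀ hz0, one_mul]
        have e' : u • Bc = z • Bc := by rw [Units.smul_def, hu, Units.val_mk0]
        rw [e, e']
        exact hμ'
      have hν : ν ∈ spectrum ℂ Bc := spectrum.smul_mem_smul_iff.mp h1
      have hν0 : ν ≠ 0 := by
        intro h0; rw [h0] at hν
        exact (spectrum.zero_mem_iff ℂ).mp hν hBcU
      have hμz : μ = z * ν := by
        rw [hν_def, ← mul_assoc, mul_inv_cancel₀ hz0, one_mul]
      have : μ / ν = z := by rw [hμz, mul_div_assoc, div_self hν0, mul_one]
      exact hspec μ hμ ν hν (this.trans hzexp)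
    have h1 : P.1 = 0 := by
      ext i j
      have h0 := congrFun (congrFun hMzero i) j
      simp only [hM, hXdef, hYdef, Matrix.add_apply, Matrix.smul_apply, Matrix.map_apply,
        Matrix.zero_apply, smul_eq_mul] at h0
      have hre := congrArg Complex.re h0
      simp at hre
      simpa using hre
    have h2 : P.2 = 0 := by
      ext i j
      have h0 := congrFun (congrFun hMzero i) j
      simp only [hM, hXdef, hYdef, Matrix.add_apply, Matrix.smul_apply, Matrix.map_apply,
        Matrix.zero_apply, smul_eq_mul] at h0
      have him := congrArg Complex.im h0
      simp at him
      simpa using him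
    exact Prod.ext h1 h2
  exact ⟨hinj, LinearMap.injective_iff_surjective.mp hinj⟩

end Polynomial


/-- The character `θ ↦ exp(i⟨κ,θ⟩)` as a monoid hom from `Multiplicative (Fin d → ℝ)`. -/
noncomputable def myChar {d : ℕ} (κ : Fin d → ℤ) : Multiplicative (Fin d → ℝ) →* ℂ where
  toFun θ := Complex.exp ((∑ i, (κ i : ℝ) * (Multiplicative.toAdd θ) i : ℝ) * Complex.I)
  map_one' := by simp
  map_mul' θ₁ θ₂ := by
    have h : (Multiplicative.toAdd (θ₁ * θ₂)) = Multiplicative.toAdd θ₁ + Multiplicative.toAdd θ₂ := rfl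
    show Complex.exp ((∑ i, (κ i : ℝ) * (Multiplicative.toAdd (θ₁ * θ₂)) i : ℝ) * Complex.I) = _
    rw [← Complex.exp_add, h]
    congr 1
    rw [← add_mul]
    congr 1
    push_cast [Pi.add_apply, mul_add, Finset.sum_add_distrib]
    ring

lemma myChar_inj {d : ℕ} : Function.Injective (myChar (d := d)) := by
  intro κ κ' h
  funext j
  by_contra hne
  have hm : (κ j : ℝ) - κ' j ≠ 0 := fun h0 => hne (by exact_mod_cast sub_eq_zero.mp h0)
  set m : ℝ := (κ j : ℝ) - κ' j with hmdef
  have hev := congrArg (fun f : Multiplicative (Fin d → ℝ) →* ℂ =>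
    f (Multiplicative.ofAdd (Pi.single j (Real.pi / m)))) h
  simp only [myChar, MonoidHom.coe_mk, OneHom.coe_mk] at hev
  have hsum : ∀ κ'' : Fin d → ℤ,
      (∑ i, (κ'' i : ℝ) * (Pi.single j (Real.pi / m) : Fin d → ℝ) i) = κ'' j * (Real.pi / m) := by
    intro κ''
    rw [Finset.sum_eq_single j]
    · simp
    · intro b _ hb; simp [Pi.single_apply, hb]
    · simp
  rw [show (Multiplicative.toAdd (Multiplicative.ofAdd (Pi.single j (Real.pi / m) : Fin d → ℝ)))
      = Pi.single j (Real.pi / m) from rfl, hsum κ, hsum κ'] at hev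
  rw [Complex.exp_eq_exp_iff_exists_int] at hev
  obtain ⟨k, hk⟩ := hev
  have him := congrArg Complex.im hk
  simp only [Complex.add_im, Complex.mul_im, Complex.ofReal_re, Complex.I_im, Complex.ofReal_im,
    Complex.I_re, Complex.intCast_re, Complex.intCast_im] at him
  -- him : real equation κ_j π/m = κ'_j π/m + k * 2π (roughly)
  have hreal : (κ j : ℝ) * (Real.pi / m) = (κ' j : ℝ) * (Real.pi / m) + k * (2 * Real.pi) := by
    norm_num at him ⊢
    linarith [him]
  have hπ : Real.pi = 2 * k * Real.pi := by
    have : ((κ j : ℝ) - κ' j) * (Real.pi / m) = k * (2 * Real.pi) := by linarith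
    rw [← hmdef] at this
    field_simp at this
    rw [show (2 * (k:ℝ)) = 1 by linarith, one_mul]
  have h1 : (1 : ℝ) = 2 * k :=
    mul_right_cancel₀ Real.pi_ne_zero (by linarith)
  have : (1 : ℤ) = 2 * k := by exact_mod_cast h1
  omega

lemma trig_indep {d : ℕ} (T : Finset (Fin d → ℕ)) (hT : (0 : Fin d → ℕ) ∉ T)
    (a b : (Fin d → ℕ) → ℝ)
    (h : ∀ θ : Fin d → ℝ, ∑ κ ∈ T, (Real.cos (∑ i, (κ i : ℝ) * θ i) * a κ
        + Real.sin (∑ i, (κ i : ℝ) * θ i) * b κ) = 0) :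
    ∀ κ ∈ T, a κ = 0 ∧ b κ = 0 := by
  classical
  have li : LinearIndependent ℂ (fun κ : Fin d → ℤ => ⇑(myChar κ)) :=
    (linearIndependent_monoidHom (Multiplicative (Fin d → ℝ)) ℂ).comp myChar myChar_inj
  set f : ↥T ⊕ ↥T → (Fin d → ℤ) := fun i => match i with
    | Sum.inl κ => fun j => (κ.1 j : ℤ)
    | Sum.inr κ => fun j => -(κ.1 j : ℤ) with hf
  have hfinj : Function.Injective f := by
    rintro (⟨κ₁, h₁⟩ | ⟨κ₁, h₁⟩) (⟨κ₂, h₂⟩ | ⟨κ₂, h₂⟩) hEq <;>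
      simp only [hf] at hEq
    · have : κ₁ = κ₂ := by
        funext j; have := congrFun hEq j; exact_mod_cast this
      simp [this]
    · exfalso
      have hκ : κ₁ ≠ 0 := fun h0 => hT (h0 ▸ h₁)
      obtain ⟨j, hj⟩ : ∃ j, κ₁ j ≠ 0 := by
        by_contra hc; push_neg at hc; exact hκ (funext hc)
      have := congrFun hEq j
      omega
    · exfalso
      have hκ : κ₂ ≠ 0 := fun h0 => hT (h0 ▸ h₂)
      obtain ⟨j, hj⟩ : ∃ j, κ₂ j ≠ 0 := by
        by_contra hc; push_neg at hc; exact hκ (funext hc)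
      have := congrFun hEq j
      omega
    · have : κ₁ = κ₂ := by
        funext j; have := congrFun hEq j; omega
      simp [this]
  have li2 : LinearIndependent ℂ (fun i => ⇑(myChar (f i))) := li.comp f hfinj
  set g : ↥T ⊕ ↥T → ℂ := fun i => match i with
    | Sum.inl κ => (a κ.1 - b κ.1 * Complex.I) / 2
    | Sum.inr κ => (a κ.1 + b κ.1 * Complex.I) / 2 with hg
  have hsum : ∑ i : ↥T ⊕ ↥T, g i • (fun θ => myChar (f i) θ) = 0 := by
    funext θ
    have key : ∀ θ' : Fin d → ℝ,
        ∑ i : ↥T ⊕ ↥T, g i * myChar (f i) (Multiplicative.ofAdd θ') = 0 := by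
      intro θ'
      rw [Fintype.sum_sum_type]
      have hexp : ∀ (κ : Fin d → ℕ) (sgn : ℝ), True := fun _ _ => trivial
      have e1 : ∀ κ : ↥T, myChar (f (Sum.inl κ)) (Multiplicative.ofAdd θ')
          = Complex.exp ((∑ i, (κ.1 i : ℝ) * θ' i : ℝ) * Complex.I) := by
        intro κ; simp only [myChar, hf, MonoidHom.coe_mk, OneHom.coe_mk]
        norm_num
      have e2 : ∀ κ : ↥T, myChar (f (Sum.inr κ)) (Multiplicative.ofAdd θ')
          = Complex.exp (-((∑ i, (κ.1 i : ℝ) * θ' i : ℝ) * Complex.I)) := by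
        intro κ; simp only [myChar, hf, MonoidHom.coe_mk, OneHom.coe_mk]
        rw [show -((((∑ i, (κ.1 i : ℝ) * θ' i) : ℝ) : ℂ) * Complex.I)
            = (((-(∑ i, (κ.1 i : ℝ) * θ' i) : ℝ)) : ℂ) * Complex.I by push_cast; ring]
        congr 2
        rw [show (Multiplicative.toAdd (Multiplicative.ofAdd θ')) = θ' from rfl]
        push_cast [neg_mul, Finset.sum_neg_distrib]
        ring
      calc (∑ κ : ↥T, g (Sum.inl κ) * myChar (f (Sum.inl κ)) (Multiplicative.ofAdd θ'))
            + ∑ κ : ↥T, g (Sum.inr κ) * myChar (f (Sum.inr κ)) (Multiplicative.ofAdd θ')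
          = ∑ κ : ↥T, ((Real.cos (∑ i, (κ.1 i : ℝ) * θ' i) * a κ.1
              + Real.sin (∑ i, (κ.1 i : ℝ) * θ' i) * b κ.1 : ℝ) : ℂ) := by
            rw [← Finset.sum_add_distrib]
            refine Finset.sum_congr rfl fun κ _ => ?_
            rw [e1, e2, hg]
            set x : ℝ := (∑ i, (κ.1 i : ℝ) * θ' i) with hx
            simp only []
            have hneg : Complex.exp (-((x:ℂ) * Complex.I))
                = Complex.cos x - Complex.sin x * Complex.I := by
              rw [show -((x:ℂ) * Complex.I) = (-(x:ℂ)) * Complex.I by ring,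
                Complex.exp_mul_I, Complex.cos_neg, Complex.sin_neg]
              ring
            rw [Complex.exp_mul_I, hneg]
            push_cast
            linear_combination (-(((b κ.1 : ℝ) : ℂ) * Complex.sin ((x:ℝ):ℂ))) * Complex.I_sq
        _ = (((∑ κ ∈ T, (Real.cos (∑ i, (κ i : ℝ) * θ' i) * a κ
              + Real.sin (∑ i, (κ i : ℝ) * θ' i) * b κ)) : ℝ) : ℂ) := by
            rw [Complex.ofReal_sum]
            rw [← Finset.sum_coe_sort T]
        _ = 0 := by rw [h θ']; norm_num
    have := key (Multiplicative.toAdd θ)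
    simpa using this
  have hz := Fintype.linearIndependent_iff.mp li2 g hsum
  intro κ hκ
  have h1 := hz (Sum.inl ⟨κ, hκ⟩)
  have h2 := hz (Sum.inr ⟨κ, hκ⟩)
  simp only [hg] at h1 h2
  have ha : ((a κ : ℂ)) = 0 := by
    have : ((a κ : ℂ) - b κ * Complex.I) = 0 := by
      field_simp at h1; linear_combination h1
    have h2' : ((a κ : ℂ) + b κ * Complex.I) = 0 := by
      field_simp at h2; linear_combination h2
    linear_combination (this + h2') / 2
  have hb : ((b κ : ℂ)) = 0 := by
    have h1' : ((a κ : ℂ) - b κ * Complex.I) = 0 := by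
      field_simp at h1; linear_combination h1
    have h2' : ((a κ : ℂ) + b κ * Complex.I) = 0 := by
      field_simp at h2; linear_combination h2
    have : (b κ : ℂ) * Complex.I = 0 := by linear_combination (h2' - h1') / 2
    rcases mul_eq_zero.mp this with h | h
    · exact h
    · exact absurd h Complex.I_ne_zero
  exact ⟨by exact_mod_cast ha, by exact_mod_cast hb⟩


lemma matTrig_eq {n d : ℕ} (B : Matrix (Fin n) (Fin n) ℝ) (ρ : Fin d → ℝ)
    (S : Finset (Fin d → ℕ)) (P1 P2 : (Fin d → ℕ) → Matrix (Fin n) (Fin n) ℝ) (θ : Fin d → ℝ) :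
    matTrigPoly S P1 P2 (θ + ρ) * B - B * matTrigPoly S P1 P2 θ
      = ∑ κ ∈ S.erase 0,
          (Real.cos (∑ i, (κ i : ℝ) * θ i) •
              ((Real.cos (∑ i, (κ i : ℝ) * ρ i) • P1 κ
                + Real.sin (∑ i, (κ i : ℝ) * ρ i) • P2 κ) * B - B * P1 κ)
           + Real.sin (∑ i, (κ i : ℝ) * θ i) •
              ((Real.cos (∑ i, (κ i : ℝ) * ρ i) • P2 κ
                - Real.sin (∑ i, (κ i : ℝ) * ρ i) • P1 κ) * B - B * P2 κ)) := by
  rw [matTrigPoly, matTrigPoly, Finset.sum_mul, Finset.mul_sum, ← Finset.sum_sub_distrib]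
  refine Finset.sum_congr rfl fun κ hκ => ?_
  have hαω : (∑ i, (κ i : ℝ) * (θ + ρ) i)
      = (∑ i, (κ i : ℝ) * θ i) + (∑ i, (κ i : ℝ) * ρ i) := by
    rw [← Finset.sum_add_distrib]
    exact Finset.sum_congr rfl fun i _ => by simp [Pi.add_apply, mul_add]
  rw [hαω, Real.cos_add, Real.sin_add]
  simp only [Matrix.add_mul, Matrix.sub_mul, Matrix.smul_mul, Matrix.mul_add, Matrix.mul_smul,
    smul_add, smul_sub, smul_smul, sub_smul, add_smul]
  module

/-- Matrix cohomological equation: if the (complex) eigenvalues of the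
invertible real matrix `B` satisfy `μ/ν ≠ exp(± i⟨κ,ρ⟩)` for all nonzero
`κ ∈ ℤ^d`, then for every matrix-valued trigonometric polynomial `R̃` with zero
average there exists a unique matrix-valued trigonometric polynomial `H` with
zero average such that `H(θ+ρ)·B − B·H(θ) = R̃(θ)` for all `θ`. -/
theorem matrix_cohomological_lemma {n d : ℕ}
    (B : Matrix (Fin n) (Fin n) ℝ) (ρ : Fin d → ℝ)
    (hB : IsUnit B)
    (heig : ∀ μ ∈ spectrum ℂ (B.map Complex.ofReal),
            ∀ ν ∈ spectrum ℂ (B.map Complex.ofReal),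
            ∀ κ : Fin d → ℤ, κ ≠ 0 →
      μ / ν ≠ Complex.exp ((∑ i, (κ i : ℝ) * ρ i : ℝ) * Complex.I) ∧
      μ / ν ≠ Complex.exp (-((∑ i, (κ i : ℝ) * ρ i : ℝ) * Complex.I)))
    (S : Finset (Fin d → ℕ))
    (Rc Rs : (Fin d → ℕ) → Matrix (Fin n) (Fin n) ℝ) :
    ∃! H : ((Fin d → ℕ) → Matrix (Fin n) (Fin n) ℝ)
            × ((Fin d → ℕ) → Matrix (Fin n) (Fin n) ℝ),
      ((∀ κ ∉ S, H.1 κ = 0 ∧ H.2 κ = 0) ∧ H.1 0 = 0 ∧ H.2 0 = 0) ∧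
      ∀ θ : Fin d → ℝ,
        matTrigPoly S H.1 H.2 (θ + ρ) * B - B * matTrigPoly S H.1 H.2 θ
          = matTrigPoly S Rc Rs θ := by
  classical
  set ω : (Fin d → ℕ) → ℝ := fun κ => ∑ i, (κ i : ℝ) * ρ i with hω
  have hbij : ∀ κ ∈ S.erase 0,
      Function.Bijective (sylMap B (Real.cos (ω κ)) (Real.sin (ω κ))) := by
    intro κ hκ
    apply sylMap_bijective B hB
    intro μ hμ ν hν
    have hκ0 : κ ≠ 0 := (Finset.mem_erase.mp hκ).1
    have hκZ : (fun i => (κ i : ℤ)) ≠ 0 := by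
      intro h0; apply hκ0; funext i
      have h2 : (κ i : ℤ) = 0 := congrFun h0 i
      show κ i = 0
      exact_mod_cast h2
    have hne := (heig μ hμ ν hν (fun i => (κ i : ℤ)) hκZ).2
    have hsum : (∑ i, (((κ i : ℤ) : ℝ)) * ρ i) = ω κ := by
      rw [hω]; push_cast; rfl
    rw [hsum] at hne
    exact hne
  have hex : ∀ κ ∈ S.erase 0,
      ∃ P, sylMap B (Real.cos (ω κ)) (Real.sin (ω κ)) P = (Rc κ, Rs κ) :=
    fun κ hκ => (hbij κ hκ).2 (Rc κ, Rs κ)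
  set sol : (Fin d → ℕ) → (Matrix (Fin n) (Fin n) ℝ × Matrix (Fin n) (Fin n) ℝ) :=
    fun κ => if h : κ ∈ S.erase 0 then (hex κ h).choose else 0 with hsoldef
  have hsol : ∀ κ (h : κ ∈ S.erase 0),
      sylMap B (Real.cos (ω κ)) (Real.sin (ω κ)) (sol κ) = (Rc κ, Rs κ) := by
    intro κ h
    rw [hsoldef]
    simp only [dif_pos h]
    exact (hex κ h).choose_spec
  have hsol0 : ∀ κ, κ ∉ S.erase 0 → sol κ = 0 := by
    intro κ h; rw [hsoldef]; simp only [dif_neg h]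
  refine ⟨(fun κ => (sol κ).1, fun κ => (sol κ).2), ⟨⟨?_, ?_, ?_⟩, ?_⟩, ?_⟩
  · -- κ ∉ S
    intro κ hκ
    have : sol κ = 0 := hsol0 κ (fun hmem => hκ (Finset.mem_of_mem_erase hmem))
    simp [this]
  · have : sol 0 = 0 := hsol0 0 (by simp)
    simp [this]
  · have : sol 0 = 0 := hsol0 0 (by simp)
    simp [this]
  · -- functional equation
    intro θ
    rw [matTrig_eq B ρ S _ _ θ, matTrigPoly]
    refine Finset.sum_congr rfl fun κ hκ => ?_
    have e1 : (Real.cos (ω κ) • (sol κ).1 + Real.sin (ω κ) • (sol κ).2) * B - B * (sol κ).1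
        = Rc κ := congrArg Prod.fst (hsol κ hκ)
    have e2 : (Real.cos (ω κ) • (sol κ).2 - Real.sin (ω κ) • (sol κ).1) * B - B * (sol κ).2
        = Rs κ := congrArg Prod.snd (hsol κ hκ)
    rw [hω] at e1 e2
    rw [e1, e2]
  · -- uniqueness
    rintro ⟨Q1, Q2⟩ ⟨⟨hout, h01, h02⟩, heqQ⟩
    obtain ⟨E1, hE1⟩ : ∃ E1 : (Fin d → ℕ) → Matrix (Fin n) (Fin n) ℝ, E1 = fun κ =>
      (Real.cos (ω κ) • Q1 κ + Real.sin (ω κ) • Q2 κ) * B - B * Q1 κ := ⟨_, rfl⟩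
    obtain ⟨E2, hE2⟩ : ∃ E2 : (Fin d → ℕ) → Matrix (Fin n) (Fin n) ℝ, E2 = fun κ =>
      (Real.cos (ω κ) • Q2 κ - Real.sin (ω κ) • Q1 κ) * B - B * Q2 κ := ⟨_, rfl⟩
    have hzero : ∀ θ : Fin d → ℝ, ∑ κ ∈ S.erase 0,
        (Real.cos (∑ i, (κ i : ℝ) * θ i) • (E1 κ - Rc κ)
          + Real.sin (∑ i, (κ i : ℝ) * θ i) • (E2 κ - Rs κ)) = 0 := by
      intro θ
      have h := heqQ θ
      rw [matTrig_eq B ρ S _ _ θ, matTrigPoly] at h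
      calc ∑ κ ∈ S.erase 0,
            (Real.cos (∑ i, (κ i : ℝ) * θ i) • (E1 κ - Rc κ)
              + Real.sin (∑ i, (κ i : ℝ) * θ i) • (E2 κ - Rs κ))
          = ∑ κ ∈ S.erase 0,
            ((Real.cos (∑ i, (κ i : ℝ) * θ i) • E1 κ + Real.sin (∑ i, (κ i : ℝ) * θ i) • E2 κ)
              - (Real.cos (∑ i, (κ i : ℝ) * θ i) • Rc κ
                + Real.sin (∑ i, (κ i : ℝ) * θ i) • Rs κ)) := by
            refine Finset.sum_congr rfl fun κ hκ => ?_
            rw [smul_sub, smul_sub]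
            abel
        _ = (∑ κ ∈ S.erase 0,
              (Real.cos (∑ i, (κ i : ℝ) * θ i) • E1 κ + Real.sin (∑ i, (κ i : ℝ) * θ i) • E2 κ))
            - ∑ κ ∈ S.erase 0,
              (Real.cos (∑ i, (κ i : ℝ) * θ i) • Rc κ
                + Real.sin (∑ i, (κ i : ℝ) * θ i) • Rs κ) := Finset.sum_sub_distrib _ _
        _ = 0 := by
            rw [sub_eq_zero, ← h]
            refine Finset.sum_congr rfl fun κ hκ => ?_
            simp only [hE1, hE2, hω]
    have hcoef : ∀ κ ∈ S.erase 0, E1 κ = Rc κ ∧ E2 κ = Rs κ := by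
      intro κ hκ
      have key : ∀ i j, (E1 κ - Rc κ) i j = 0 ∧ (E2 κ - Rs κ) i j = 0 := by
        intro i j
        refine trig_indep (S.erase 0) (Finset.notMem_erase 0 S)
          (fun κ' => (E1 κ' - Rc κ') i j) (fun κ' => (E2 κ' - Rs κ') i j) ?_ κ hκ
        intro θ
        have h := congrFun (congrFun (hzero θ) i) j
        rw [Matrix.sum_apply] at h
        rw [show (0 : Matrix (Fin n) (Fin n) ℝ) i j = 0 from rfl] at h
        rw [← h]
        refine Finset.sum_congr rfl fun κ' hκ' => ?_
        simp [Matrix.add_apply, Matrix.smul_apply, smul_eq_mul]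
      constructor
      · ext i j
        have := (key i j).1
        rw [Matrix.sub_apply] at this
        linarith
      · ext i j
        have := (key i j).2
        rw [Matrix.sub_apply] at this
        linarith
    have hQsol : ∀ κ ∈ S.erase 0, (Q1 κ, Q2 κ) = sol κ := by
      intro κ hκ
      refine (hbij κ hκ).1 ?_
      rw [hsol κ hκ]
      have h1 := (hcoef κ hκ).1
      have h2 := (hcoef κ hκ).2
      rw [hE1] at h1
      rw [hE2] at h2
      simp only [] at h1 h2
      exact Prod.ext h1 h2
    refine Prod.ext ?_ ?_ <;> · {
      funext κ
      by_cases hκ : κ ∈ S.erase 0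
      · first
        | exact congrArg Prod.fst (hQsol κ hκ)
        | exact congrArg Prod.snd (hQsol κ hκ)
      · have hsκ : sol κ = 0 := hsol0 κ hκ
        rw [Finset.mem_erase] at hκ
        push_neg at hκ
        by_cases hκS : κ ∈ S
        · have hκ0 : κ = 0 := by
            by_contra h0
            exact (hκ h0) hκS
          subst hκ0
          simp only [hsκ]
          first | simpa using h01 | simpa using h02
        · have := hout κ hκS
          simp only [hsκ]
          first | simpa using this.1 | simpa using this.2 }
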